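/- arXiv:1610.07447 — 2 statements merged into one kernel-verified Lean document; each statement's English description precedes it below -/
import Mathlib

section
/- Let G be a group and n a positive integer. The group of units (invertible elements) of the inverse monoid of n×n generalized rook matrices over G⁰ = G ∪ {0} is isomorphic to the wreath product G ≀ Sym(Fin n). -/
/-- A generalized rook matrix of order `n` over the group with zero `G⁰`:
an `n × n` matrix over `G ∪ {0}` with at most one nonzero entry in each row
and each column.  We record, for each column `j`, the (optional) pair
`(entry, row)` of its unique nonzero entry; the field `inj` states that
distinct columns use distinct rows. -/
structure Rook (n : ℕ) (G : Type*) [Group G] : Type _ where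
  col : Fin n → Option (G × Fin n)
  inj : ∀ ⦃j k : Fin n⦄ ⦃p q : G × Fin n⦄,
      col j = some p → col k = some q → p.2 = q.2 → j = k

namespace Rook

variable {n : ℕ} {G : Type*} [Group G]

theorem ext' {x y : Rook n G} (h : x.col = y.col) : x = y := by
  cases x; cases y; cases h; rfl

/-- Matrix multiplication of generalized rook matrices. -/
instance : Mul (Rook n G) where
  mul x y :=
  { col := fun j => (y.col j).bind fun p => (x.col p.2).map fun q => (q.1 * p.1, q.2)
    inj := by
      intro j k p q hp hq hpq
      simp only [Option.bind_eq_some_iff, Option.map_eq_some_iff] at hp hq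
      obtain ⟨pj, hyj, qj, hxj, rfl⟩ := hp
      obtain ⟨pk, hyk, qk, hxk, rfl⟩ := hq
      exact y.inj hyj hyk (x.inj hxj hxk hpq) }

theorem mul_col (x y : Rook n G) (j : Fin n) :
    (x * y).col j = (y.col j).bind fun p => (x.col p.2).map fun q => (q.1 * p.1, q.2) :=
  rfl

/-- The identity matrix. -/
instance : One (Rook n G) where
  one :=
  { col := fun j => some (1, j)
    inj := by
      intro j k p q hp hq hpq
      simp only [Option.some.injEq] at hp hq
      subst hp; subst hq; exact hpq }

theorem one_col (j : Fin n) : (1 : Rook n G).col j = some (1, j) := rfl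

/-- The zero matrix. -/
instance : Zero (Rook n G) where
  zero :=
  { col := fun _ => none
    inj := fun _ _ _ _ hp _ _ => nomatch hp }

instance : Monoid (Rook n G) where
  mul_assoc x y z := by
    refine ext' (funext fun j => ?_)
    simp only [mul_col]
    rcases hz : z.col j with _ | p
    · simp
    rcases hy : y.col p.2 with _ | p'
    · simp [hy]
    rcases hx : x.col p'.2 with _ | p''
    · simp [hy, hx]
    simp [hy, hx, mul_assoc]
  one_mul x := by
    refine ext' (funext fun j => ?_)
    simp only [mul_col]
    rcases hx : x.col j with _ | p <;> simp [one_col]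
  mul_one x := by
    refine ext' (funext fun j => ?_)
    simp only [mul_col, one_col]
    rcases hx : x.col j with _ | p <;> simp [hx]

open scoped Classical in
/-- The inverse of a generalized rook matrix (conjugate transpose pattern). -/
noncomputable instance : Inv (Rook n G) where
  inv x :=
  { col := fun i =>
      if h : ∃ jp : Fin n × (G × Fin n), x.col jp.1 = some jp.2 ∧ jp.2.2 = i
      then some ((h.choose.2.1)⁻¹, h.choose.1)
      else none
    inj := by
      intro i i' p q hp hq hpq
      split_ifs at hp hq with h h'
      obtain ⟨hcol, hrow⟩ := h.choose_spec
      obtain ⟨hcol', hrow'⟩ := h'.choose_spec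
      injection hp with hp'
      injection hq with hq'
      subst hp'; subst hq'
      have hj : h.choose.1 = h'.choose.1 := hpq
      rw [← hj, hcol] at hcol'
      have hpq2 : h.choose.2 = h'.choose.2 := Option.some.inj hcol'
      rw [← hrow, ← hrow', hpq2] }

end Rook

/-- The action of the symmetric group on `Fin n` on `Fin n → G` by permuting
coordinates, as a homomorphism into the automorphism group. -/
def permAction (G : Type*) [Group G] (n : ℕ) :
    Equiv.Perm (Fin n) →* MulAut (Fin n → G) where
  toFun σ :=
    { toFun := fun f => f ∘ σ.symm
      invFun := fun f => f ∘ σ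
      left_inv := fun f => by ext i; simp
      right_inv := fun f => by ext i; simp
      map_mul' := fun f g => rfl }
  map_one' := by
    ext f i
    rfl
  map_mul' σ τ := by
    ext f i
    simp [Equiv.Perm.mul_def, Equiv.symm_trans_apply]

/-- The permutational wreath product `G ≀ Sym(Fin n)`: the semidirect product
of `Fin n → G` by `Equiv.Perm (Fin n)` acting by permuting coordinates. -/
abbrev Wreath (G : Type*) [Group G] (n : ℕ) :=
  SemidirectProduct (Fin n → G) (Equiv.Perm (Fin n)) (permAction G n)


namespace RookAux

variable {n : ℕ} {G : Type*} [Group G]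

/-- The rook matrix associated to a wreath product element. -/
def toRook (w : Wreath G n) : Rook n G where
  col j := some (w.left (w.right j), w.right j)
  inj := by
    intro j k p q hp hq hpq
    simp only [Option.some.injEq] at hp hq
    subst hp; subst hq
    exact w.right.injective hpq

theorem toRook_col (w : Wreath G n) (j : Fin n) :
    (toRook w).col j = some (w.left (w.right j), w.right j) := rfl

theorem toRook_one : toRook (1 : Wreath G n) = 1 := by
  refine Rook.ext' (funext fun j => ?_)
  simp [toRook_col, Rook.one_col]

theorem toRook_mul (a b : Wreath G n) : toRook (a * b) = toRook a * toRook b := by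
  refine Rook.ext' (funext fun j => ?_)
  simp only [Rook.mul_col, toRook_col, Option.bind_some, Option.map_some,
    SemidirectProduct.mul_left, SemidirectProduct.mul_right, Option.some.injEq, Prod.mk.injEq]
  constructor
  · show a.left ((a.right * b.right) j) * (permAction G n a.right b.left) ((a.right * b.right) j)
      = a.left (a.right (b.right j)) * b.left (b.right j)
    simp [permAction, Equiv.Perm.mul_apply]
  · rfl

theorem toRook_injective : Function.Injective (toRook : Wreath G n → Rook n G) := by
  intro a b h
  have hcol : ∀ j, (toRook a).col j = (toRook b).col j := fun j => by rw [h]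
  have hr : a.right = b.right := by
    refine Equiv.ext fun j => ?_
    have := hcol j
    simp only [toRook_col, Option.some.injEq, Prod.mk.injEq] at this
    exact this.2
  have hl : a.left = b.left := by
    ext i
    have := hcol (a.right.symm i)
    simp only [toRook_col, Option.some.injEq, Prod.mk.injEq] at this
    rw [Equiv.apply_symm_apply] at this
    rw [← hr] at this
    rw [Equiv.apply_symm_apply] at this
    exact this.1
  exact SemidirectProduct.ext hl hr

/-- The wreath product maps into the monoid of rook matrices. -/
def toRookHom : Wreath G n →* Rook n G where
  toFun := toRook
  map_one' := toRook_one
  map_mul' := toRook_mul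

theorem toRook_surjective_units (u : (Rook n G)ˣ) :
    ∃ w : Wreath G n, toRook w = (u : Rook n G) := by
  classical
  set a : Rook n G := (u : Rook n G) with ha
  have hba : (↑u⁻¹ : Rook n G) * a = 1 := u.inv_mul
  have hsome : ∀ j : Fin n, ∃ p : G × Fin n, a.col j = some p := by
    intro j
    have h1 : ((↑u⁻¹ : Rook n G) * a).col j = some (1, j) := by
      rw [hba, Rook.one_col]
    rw [Rook.mul_col] at h1
    rcases hc : a.col j with _ | p
    · rw [hc] at h1; simp at h1
    · exact ⟨p, rfl⟩
  choose e he using hsome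
  have hinj : Function.Injective fun j => (e j).2 := by
    intro j k h
    exact a.inj (he j) (he k) h
  let σ : Equiv.Perm (Fin n) := Equiv.ofBijective _ (Finite.injective_iff_bijective.mp hinj)
  refine ⟨⟨fun i => (e (σ.symm i)).1, σ⟩, Rook.ext' (funext fun j => ?_)⟩
  have hσ : σ j = (e j).2 := rfl
  simp only [toRook_col, he j, Option.some.injEq]
  rw [Equiv.symm_apply_apply]
  exact Prod.ext rfl hσ

end RookAux

/-- The group of units of the monoid `Matₙ(G⁰)` of generalized rook matrices
over `G⁰ = G ∪ {0}` is isomorphic to the wreath product `G ≀ Sym(Fin n)`. -/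

theorem stmt13 (n : ℕ) (hn : 0 < n) (G : Type*) [Group G] :
    Nonempty ((Rook n G)ˣ ≃* Wreath G n) := by
  classical
  have hbij : Function.Bijective (RookAux.toRookHom.toHomUnits :
      Wreath G n → (Rook n G)ˣ) := by
    constructor
    · intro a b h
      apply RookAux.toRook_injective (n := n) (G := G)
      have := congrArg Units.val h
      exact this
    · intro u
      obtain ⟨w, hw⟩ := RookAux.toRook_surjective_units u
      exact ⟨w, Units.ext hw⟩
  exact ⟨(MulEquiv.ofBijective _ hbij).symm⟩
end

section
/- Let G and H be groups and n a positive integer. Then G⁰ embeds as a monoid with zero into Matₙ(H⁰) via a zero-preserving multiplicative embedding sending 1 to an idempotent, if and only if G embeds as a subgroup into the wreath product H ≀ Sym(Fin m) for some m ≤ n. -/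
namespace Rook

variable {n : ℕ} {G : Type*} [Group G]

theorem zero_col (j : Fin n) : (0 : Rook n G).col j = none := rfl

theorem zero_mul' (x : Rook n G) : 0 * x = 0 := by
  refine ext' (funext fun j => ?_)
  rw [mul_col]
  rcases h : x.col j with _ | p <;> simp [zero_col]

theorem mul_zero' (x : Rook n G) : x * 0 = 0 := by
  refine ext' (funext fun j => ?_)
  rw [mul_col]; simp [zero_col]

end Rook

/-- The embedding of the wreath product into rook matrices. -/
def wreathToRook {n m : ℕ} (hm : m ≤ n) {H : Type*} [Group H] (w : Wreath H m) :
    Rook n H where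
  col j := if h : (j : ℕ) < m then
      some (w.left (w.right ⟨j, h⟩), Fin.castLE hm (w.right ⟨j, h⟩))
    else none
  inj := by
    intro j k p q hp hq hpq
    split_ifs at hp hq with h1 h2
    injection hp with hp; injection hq with hq
    subst hp; subst hq
    simp only at hpq
    have h3 : w.right ⟨j, h1⟩ = w.right ⟨k, h2⟩ := Fin.castLE_injective hm hpq
    have h4 : (⟨(j : ℕ), h1⟩ : Fin m) = ⟨(k : ℕ), h2⟩ := w.right.injective h3
    exact Fin.ext (Fin.mk.inj_iff.mp h4)

theorem wreathToRook_col_pos {n m : ℕ} (hm : m ≤ n) {H : Type*} [Group H]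
    (w : Wreath H m) (j : Fin n) (h : (j : ℕ) < m) :
    (wreathToRook hm w).col j
      = some (w.left (w.right ⟨j, h⟩), Fin.castLE hm (w.right ⟨j, h⟩)) :=
  dif_pos h

theorem wreathToRook_col_neg {n m : ℕ} (hm : m ≤ n) {H : Type*} [Group H]
    (w : Wreath H m) (j : Fin n) (h : ¬ (j : ℕ) < m) :
    (wreathToRook hm w).col j = none :=
  dif_neg h

theorem wreathToRook_mul {n m : ℕ} (hm : m ≤ n) {H : Type*} [Group H]
    (w₁ w₂ : Wreath H m) :
    wreathToRook hm (w₁ * w₂) = wreathToRook hm w₁ * wreathToRook hm w₂ := by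
  refine Rook.ext' (funext fun j => ?_)
  rw [Rook.mul_col]
  by_cases h : (j : ℕ) < m
  · rw [wreathToRook_col_pos hm _ j h, wreathToRook_col_pos hm _ j h]
    have h2 : ((Fin.castLE hm (w₂.right ⟨j, h⟩) : Fin n) : ℕ) < m := by
      simp [Fin.coe_castLE]
    rw [Option.bind_some]
    rw [wreathToRook_col_pos hm w₁ _ h2]
    have h3 : (⟨((Fin.castLE hm (w₂.right ⟨j, h⟩) : Fin n) : ℕ), h2⟩ : Fin m)
        = w₂.right ⟨j, h⟩ := by
      apply Fin.ext; simp [Fin.coe_castLE]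
    rw [h3, Option.map_some]
    simp [SemidirectProduct.mul_left, SemidirectProduct.mul_right, permAction,
      Equiv.Perm.mul_apply]
  · rw [wreathToRook_col_neg hm _ j h, wreathToRook_col_neg hm _ j h]
    rfl

theorem wreathToRook_injective {n m : ℕ} (hm : m ≤ n) {H : Type*} [Group H] :
    Function.Injective (wreathToRook hm (H := H) (n := n)) := by
  intro w₁ w₂ hw
  have hlt : ∀ j : Fin m, ((Fin.castLE hm j : Fin n) : ℕ) < m := fun j => by
    simp [Fin.coe_castLE]
  have hmk : ∀ j : Fin m, (⟨((Fin.castLE hm j : Fin n) : ℕ), hlt j⟩ : Fin m) = j := fun j => by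
    apply Fin.ext; simp [Fin.coe_castLE]
  have key : ∀ j : Fin m,
      (w₁.left (w₁.right j), Fin.castLE hm (w₁.right j))
        = (w₂.left (w₂.right j), Fin.castLE hm (w₂.right j)) := by
    intro j
    have h1 := wreathToRook_col_pos hm w₁ (Fin.castLE hm j) (hlt j)
    have h2 := wreathToRook_col_pos hm w₂ (Fin.castLE hm j) (hlt j)
    rw [hmk j] at h1 h2
    rw [hw] at h1
    exact Option.some.inj (h1.symm.trans h2)
  have hright : w₁.right = w₂.right := by
    apply Equiv.ext; intro j
    exact Fin.castLE_injective hm (congrArg Prod.snd (key j))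
  have hleft : w₁.left = w₂.left := by
    funext i
    have := congrArg Prod.fst (key (w₁.right.symm i))
    simpa [hright, Equiv.apply_symm_apply] using this
  cases w₁; cases w₂
  simp_all


theorem stmt15_forward {n : ℕ} {G H : Type*} [Group G] [Group H]
    (φ : WithZero G → Rook n H) (hinj : Function.Injective φ)
    (hmul : ∀ a b : WithZero G, φ (a * b) = φ a * φ b)
    (hid : φ 1 * φ 1 = φ 1) :
    ∃ m : ℕ, m ≤ n ∧ ∃ ψ : G →* Wreath H m, Function.Injective ψ := by
  classical
  set e := φ 1 with he
  -- structure of the idempotent e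
  have hestruct : ∀ (j : Fin n) (p : H × Fin n), e.col j = some p → p = (1, j) := by
    intro j p hp
    have h0 : (e * e).col j = e.col j := by rw [hid]
    rw [Rook.mul_col, hp, Option.bind_some] at h0
    rcases Option.map_eq_some_iff.mp h0 with ⟨q, hq, hqe⟩
    obtain ⟨h1, hq2⟩ := Prod.ext_iff.mp hqe
    have hjp : j = p.2 := e.inj hp hq hq2.symm
    rw [← hjp] at hq
    have hpq : p = q := Option.some.inj (hp.symm.trans hq)
    have h2 : q.1 = 1 := mul_right_cancel (h1.trans (one_mul p.1).symm)
    have h3 : p.1 = 1 := by rw [hpq, h2]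
    rw [Prod.ext_iff]
    exact ⟨h3, hjp.symm⟩
  have hB : ∀ (a : WithZero G) (j : Fin n) (p : H × Fin n),
      (φ a).col j = some p → (e.col j).isSome := by
    intro a j p hp
    have h0 : (φ a * e).col j = (φ a).col j := by rw [he, ← hmul, mul_one]
    rw [Rook.mul_col, hp] at h0
    rcases Option.bind_eq_some_iff.mp h0 with ⟨q, hq, -⟩
    rw [hq]; rfl
  have hA : ∀ (a : WithZero G) (j : Fin n) (p : H × Fin n),
      (φ a).col j = some p → (e.col p.2).isSome := by
    intro a j p hp
    have h0 : (e * φ a).col j = (φ a).col j := by rw [he, ← hmul, one_mul]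
    rw [Rook.mul_col, hp, Option.bind_some] at h0
    rcases Option.map_eq_some_iff.mp h0 with ⟨q, hq, -⟩
    rw [hq]; rfl
  have hC : ∀ (g : G) (j : Fin n), (e.col j).isSome → ((φ ↑g).col j).isSome := by
    intro g j hj
    have h0 : (φ ↑(g⁻¹) * φ ↑g).col j = e.col j := by
      rw [he, ← hmul, ← WithZero.coe_mul, inv_mul_cancel, WithZero.coe_one]
    rcases Option.isSome_iff_exists.mp hj with ⟨p, hp⟩
    rcases hcase : (φ ↑g).col j with _ | q
    · rw [Rook.mul_col, hcase, hp] at h0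
      exact absurd h0 (by simp)
    · rfl
  have hone_col : ∀ j : Fin n, (e.col j).isSome → e.col j = some (1, j) := by
    intro j hj
    rcases Option.isSome_iff_exists.mp hj with ⟨p, hp⟩
    rw [hp, hestruct j p hp]
  -- the domain of the idempotent
  let D := {j : Fin n // (e.col j).isSome}
  let m := Fintype.card D
  have hmn : m ≤ n := by
    have h1 := Fintype.card_subtype_le (fun j : Fin n => (e.col j).isSome)
    simpa using h1
  let ι : D ≃ Fin m := Fintype.equivFin D
  have hCd : ∀ (g : G) (d : D), ((φ ↑g).col d.1).isSome := fun g d => hC g d.1 d.2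
  let Φ : G → D → H × D := fun g d =>
    ((((φ ↑g).col d.1).get (hCd g d)).1,
     ⟨(((φ ↑g).col d.1).get (hCd g d)).2,
       hA ↑g d.1 _ (Option.some_get (hCd g d)).symm⟩)
  have hΦ : ∀ (g : G) (d : D),
      (φ ↑g).col d.1 = some ((Φ g d).1, ((Φ g d).2 : Fin n)) :=
    fun g d => (Option.some_get (hCd g d)).symm
  have hΦone : ∀ d : D, Φ 1 d = (1, d) := by
    intro d
    have h1 : (φ ↑(1 : G)).col d.1 = some (1, d.1) := by
      rw [WithZero.coe_one, ← he]; exact hone_col d.1 d.2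
    have h3 := Option.some.inj (h1.symm.trans (hΦ 1 d))
    obtain ⟨h31, h32⟩ := Prod.ext_iff.mp h3
    rw [Prod.ext_iff]
    exact ⟨h31.symm, Subtype.ext h32.symm⟩
  have hΦmul : ∀ (g h : G) (d : D),
      Φ (g * h) d = ((Φ g (Φ h d).2).1 * (Φ h d).1, (Φ g (Φ h d).2).2) := by
    intro g h d
    have h0 : (φ ↑(g * h)).col d.1 = (φ ↑g * φ ↑h).col d.1 := by
      rw [WithZero.coe_mul, hmul]
    rw [Rook.mul_col, hΦ h d, Option.bind_some] at h0
    simp only at h0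
    rw [hΦ g (Φ h d).2, Option.map_some] at h0
    simp only at h0
    have h3 := Option.some.inj ((hΦ (g * h) d).symm.trans h0)
    obtain ⟨h31, h32⟩ := Prod.ext_iff.mp h3
    rw [Prod.ext_iff]
    exact ⟨h31, Subtype.ext h32⟩
  have hΦΦ : ∀ (g h : G) (d : D), (Φ g (Φ h d).2).2 = (Φ (g * h) d).2 :=
    fun g h d => ((Prod.ext_iff.mp (hΦmul g h d)).2).symm
  -- the permutation part
  let σf : G → Fin m → Fin m := fun g i => ι ((Φ g (ι.symm i)).2)
  have hσfap : ∀ (g : G) (d : D), σf g (ι d) = ι ((Φ g d).2) := by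
    intro g d
    show ι ((Φ g (ι.symm (ι d))).2) = ι ((Φ g d).2)
    rw [Equiv.symm_apply_apply]
  have hσfcomp : ∀ (g h : G) (i : Fin m), σf g (σf h i) = σf (g * h) i := by
    intro g h i
    show ι ((Φ g (ι.symm (σf h i))).2) = ι ((Φ (g * h) (ι.symm i)).2)
    rw [show σf h i = ι ((Φ h (ι.symm i)).2) from rfl, Equiv.symm_apply_apply,
      hΦΦ g h (ι.symm i)]
  have hσfone : ∀ i : Fin m, σf 1 i = i := by
    intro i
    show ι ((Φ 1 (ι.symm i)).2) = i
    rw [hΦone]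
    exact ι.apply_symm_apply i
  have hσfinv : ∀ (g : G) (i : Fin m), σf g⁻¹ (σf g i) = i := by
    intro g i
    rw [hσfcomp, inv_mul_cancel, hσfone]
  have hσfinv' : ∀ (g : G) (i : Fin m), σf g (σf g⁻¹ i) = i := by
    intro g i
    rw [hσfcomp, mul_inv_cancel, hσfone]
  let σ : G → Equiv.Perm (Fin m) := fun g =>
    ⟨σf g, σf g⁻¹, hσfinv g, hσfinv' g⟩
  have hσmul : ∀ g h : G, σ (g * h) = σ g * σ h := by
    intro g h
    apply Equiv.ext; intro i
    rw [Equiv.Perm.mul_apply]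
    show σf (g * h) i = σf g (σf h i)
    exact (hσfcomp g h i).symm
  -- the function part
  let ff : G → Fin m → H := fun g i => (Φ g (ι.symm (σf g⁻¹ i))).1
  have hf : ∀ (g : G) (d : D), ff g (σf g (ι d)) = (Φ g d).1 := by
    intro g d
    show (Φ g (ι.symm (σf g⁻¹ (σf g (ι d))))).1 = (Φ g d).1
    rw [hσfinv g (ι d), Equiv.symm_apply_apply]
  have hψmul : ∀ g h : G,
      (⟨ff (g * h), σ (g * h)⟩ : Wreath H m) = ⟨ff g, σ g⟩ * ⟨ff h, σ h⟩ := by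
    intro g h
    refine SemidirectProduct.ext ?_ ?_
    · funext i
      set d : D := ι.symm (σf (g * h)⁻¹ i) with hd
      have hι : ι d = σf (g * h)⁻¹ i := ι.apply_symm_apply _
      have hi : σf (g * h) (ι d) = i := by rw [hι]; exact hσfinv' (g * h) i
      have e2 : σf g (σf h (ι d)) = i := by rw [hσfcomp]; exact hi
      have hhd : σf h (ι d) = ι ((Φ h d).2) := hσfap h d
      have e3 : ff g i = (Φ g (Φ h d).2).1 := by
        rw [← e2, hhd]
        exact hf g ((Φ h d).2)
      have e4 : ff h (σf g⁻¹ i) = (Φ h d).1 := by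
        rw [← e2, hσfinv g]
        exact hf h d
      show ff (g * h) i = ff g i * ff h (σf g⁻¹ i)
      rw [e3, e4, ← hi, hf (g * h) d]
      exact (Prod.ext_iff.mp (hΦmul g h d)).1
    · rw [SemidirectProduct.mul_right]
      exact hσmul g h
  have hψinj : ∀ g h : G,
      (⟨ff g, σ g⟩ : Wreath H m) = ⟨ff h, σ h⟩ → g = h := by
    intro g h hgh
    injection hgh with hfe hσe
    have hσfe : σf g = σf h := congrArg Equiv.toFun hσe
    have hΦe : ∀ d : D, Φ g d = Φ h d := by
      intro d
      have h2 : (Φ g d).2 = (Φ h d).2 := by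
        apply ι.injective
        rw [← hσfap g d, ← hσfap h d, hσfe]
      have h1 : (Φ g d).1 = (Φ h d).1 := by
        rw [← hf g d, ← hf h d, hfe, hσfe]
      rw [Prod.ext_iff]; exact ⟨h1, h2⟩
    have hcol : φ ↑g = φ ↑h := by
      refine Rook.ext' (funext fun j => ?_)
      by_cases hj : (e.col j).isSome
      · rcases hg : (φ ↑g).col j with _ | p
        · exact absurd (hCd g ⟨j, hj⟩)
            (by rw [show ((⟨j, hj⟩ : D) : Fin n) = j from rfl, hg]; simp)
        · rcases hh : (φ ↑h).col j with _ | q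
          · exact absurd (hCd h ⟨j, hj⟩)
              (by rw [show ((⟨j, hj⟩ : D) : Fin n) = j from rfl, hh]; simp)
          · have hgΦ := Option.some.inj (hg.symm.trans (hΦ g ⟨j, hj⟩))
            have hhΦ := Option.some.inj (hh.symm.trans (hΦ h ⟨j, hj⟩))
            rw [hgΦ, hhΦ, hΦe ⟨j, hj⟩]
      · rcases hg : (φ ↑g).col j with _ | p
        · rcases hh : (φ ↑h).col j with _ | q
          · rfl
          · exact absurd (hB ↑h j q hh) hj
        · exact absurd (hB ↑g j p hg) hj
    exact WithZero.coe_inj.mp (hinj hcol)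
  exact ⟨m, hmn, MonoidHom.mk' (fun g => ⟨ff g, σ g⟩) hψmul,
    fun g h hgh => hψinj g h hgh⟩

/-- `G⁰` embeds into `Matₙ(H⁰)` via a zero-preserving multiplicative embedding
(sending `1` to an idempotent) if and only if `G` embeds as a subgroup into
the wreath product `H ≀ Sym(Fin m)` for some `m ≤ n`. -/
theorem stmt15 (n : ℕ) (hn : 0 < n) (G H : Type*) [Group G] [Group H] :
    (∃ φ : WithZero G → Rook n H,
        Function.Injective φ ∧
        (∀ a b : WithZero G, φ (a * b) = φ a * φ b) ∧
        φ 0 = 0 ∧ φ 1 * φ 1 = φ 1) ↔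
      ∃ m : ℕ, m ≤ n ∧ ∃ ψ : G →* Wreath H m, Function.Injective ψ := by
  constructor
  · rintro ⟨φ, hinj, hmul, hzero, hid⟩
    exact stmt15_forward φ hinj hmul hid
  · rintro ⟨m, hmn, ψ, hψ⟩
    classical
    -- reduce to the case `0 < m`
    obtain ⟨m, hmn, hm1, ψ, hψ⟩ :
        ∃ m : ℕ, m ≤ n ∧ 0 < m ∧ ∃ ψ : G →* Wreath H m, Function.Injective ψ := by
      rcases Nat.eq_zero_or_pos m with rfl | hm
      · have hsub : ∀ a b : Wreath H 0, a = b := by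
          intro a b
          refine SemidirectProduct.ext ?_ ?_
          · funext i; exact i.elim0
          · exact Equiv.ext fun i => i.elim0
        have hG : ∀ a b : G, a = b := fun a b => hψ (hsub _ _)
        exact ⟨1, hn, one_pos, 1, fun a b _ => hG a b⟩
      · exact ⟨m, hmn, hm, ψ, hψ⟩
    set φ : WithZero G → Rook n H :=
      fun x => if hx : x = 0 then 0 else wreathToRook hmn (ψ (WithZero.unzero hx))
      with hφ
    have hφ0 : φ 0 = 0 := dif_pos rfl
    have hφcoe : ∀ g : G, φ ↑g = wreathToRook hmn (ψ g) := by
      intro g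
      rw [hφ]
      simp only [WithZero.coe_ne_zero, dif_neg, not_false_iff, WithZero.unzero_coe]
    have hφmul : ∀ a b : WithZero G, φ (a * b) = φ a * φ b := by
      intro a b
      by_cases ha : a = 0
      · rw [ha, zero_mul, hφ0, Rook.zero_mul']
      by_cases hb : b = 0
      · rw [hb, mul_zero, hφ0, Rook.mul_zero']
      rw [← WithZero.coe_unzero ha, ← WithZero.coe_unzero hb, ← WithZero.coe_mul,
        hφcoe, hφcoe, hφcoe, map_mul, wreathToRook_mul]
    have hφinj : Function.Injective φ := by
      intro a b hab
      have hne : ∀ (g : G), φ ↑g ≠ 0 := by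
        intro g hg
        have h1 := wreathToRook_col_pos hmn (ψ g) ⟨0, hn⟩ hm1
        rw [← hφcoe, hg] at h1
        exact absurd h1 (by simp [Rook.zero_col])
      by_cases ha : a = 0
      · by_cases hb : b = 0
        · rw [ha, hb]
        · rw [← WithZero.coe_unzero hb] at hab ⊢
          rw [ha, hφ0] at hab
          exact absurd hab.symm (hne _)
      · by_cases hb : b = 0
        · rw [← WithZero.coe_unzero ha] at hab ⊢
          rw [hb, hφ0] at hab
          exact absurd hab (hne _)
        · rw [← WithZero.coe_unzero ha, ← WithZero.coe_unzero hb] at hab ⊢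
          rw [hφcoe, hφcoe] at hab
          rw [hψ (wreathToRook_injective hmn hab)]
    refine ⟨φ, hφinj, hφmul, hφ0, ?_⟩
    rw [← hφmul, one_mul]
end
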